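/- Every isotropic subspace of ℝ^{2n} is a Krylov subspace of a skew-Hamiltonian matrix: if L ⊆ ℝ^{2n} is an isotropic subspace of dimension k, then there exist a skew-Hamiltonian matrix H ∈ ℝ^{2n×2n} and a vector x ∈ ℝ^{2n} such that L = span{x, Hx, …, H^{k-1}x}. -/

import Mathlib

open Matrix

noncomputable section

/-- The canonical skew-symmetric matrix `J = [[0, I],[-I, 0]]`. -/
def Jmat (n : ℕ) : Matrix (Fin n ⊕ Fin n) (Fin n ⊕ Fin n) ℝ :=
  Matrix.fromBlocks 0 1 (-1) 0

/-- A matrix `H` is skew-Hamiltonian if `Jᵀ Hᵀ J = H`. -/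
def IsSkewHamiltonian {n : ℕ} (H : Matrix (Fin n ⊕ Fin n) (Fin n ⊕ Fin n) ℝ) : Prop :=
  (Jmat n)ᵀ * Hᵀ * Jmat n = H

lemma Jmat_transpose (n : ℕ) : (Jmat n)ᵀ = -Jmat n := by
  simp [Jmat, fromBlocks_transpose, fromBlocks_neg, neg_neg, neg_zero]

lemma Jmat_mul_Jmat (n : ℕ) : Jmat n * Jmat n = -1 := by
  have h : (-1 : Matrix (Fin n ⊕ Fin n) (Fin n ⊕ Fin n) ℝ)
      = fromBlocks (-1) (-0) (-0) (-1) := by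
    rw [← fromBlocks_neg, fromBlocks_one]
  simp [Jmat, fromBlocks_multiply, h]

lemma vecMulVec_mulVec' {ι : Type*} [Fintype ι] (a b v : ι → ℝ) :
    vecMulVec a b *ᵥ v = (b ⬝ᵥ v) • a := by
  ext i
  simp [vecMulVec_apply, mulVec, dotProduct, Finset.mul_sum, mul_comm, mul_assoc, mul_left_comm]

lemma vecMulVec_transpose' {ι : Type*} [Fintype ι] (a b : ι → ℝ) :
    (vecMulVec a b)ᵀ = vecMulVec b a := by
  ext i j
  simp [vecMulVec_apply, transpose_apply, mul_comm]

lemma sum_mulVec' {ι α : Type*} [Fintype ι] (s : Finset α)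
    (A : α → Matrix ι ι ℝ) (v : ι → ℝ) :
    (∑ a ∈ s, A a) *ᵥ v = ∑ a ∈ s, (A a *ᵥ v) := by
  ext i
  simp [mulVec, dotProduct, Matrix.sum_apply, Finset.sum_mul]
  rw [Finset.sum_comm]

/-- An orthonormal family spanning `L`. -/
lemma exists_orthonormal_fun {n k : ℕ} (L : Submodule ℝ ((Fin n ⊕ Fin n) → ℝ))
    (hdim : Module.finrank ℝ L = k) :
    ∃ f : Fin k → ((Fin n ⊕ Fin n) → ℝ),
      (∀ i, f i ∈ L) ∧
      (∀ i j, f i ⬝ᵥ f j = if i = j then 1 else 0) ∧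
      Submodule.span ℝ (Set.range f) = L := by
  let e : EuclideanSpace ℝ (Fin n ⊕ Fin n) ≃ₗ[ℝ] ((Fin n ⊕ Fin n) → ℝ) :=
    WithLp.linearEquiv 2 ℝ ((Fin n ⊕ Fin n) → ℝ)
  let L' : Submodule ℝ (EuclideanSpace ℝ (Fin n ⊕ Fin n)) := L.comap e.toLinearMap
  have hL' : L'.map (e : EuclideanSpace ℝ (Fin n ⊕ Fin n) →ₗ[ℝ] ((Fin n ⊕ Fin n) → ℝ)) = L :=
    Submodule.map_comap_eq_of_surjective e.surjective L
  have hdim' : Module.finrank ℝ L' = k := by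
    rw [← hdim, ← hL']
    exact (LinearEquiv.finrank_map_eq e L').symm
  let ob := (stdOrthonormalBasis ℝ L').reindex (finCongr hdim')
  have key : ∀ x y : EuclideanSpace ℝ (Fin n ⊕ Fin n), (e x) ⬝ᵥ (e y) = @inner ℝ _ _ x y := by
    intro x y
    simp [dotProduct, PiLp.inner_apply, RCLike.inner_apply]
    exact congrArg₂ (· + ·) (Finset.sum_congr rfl fun a _ => mul_comm _ _)
      (Finset.sum_congr rfl fun a _ => mul_comm _ _)
  refine ⟨fun i => e (ob i : EuclideanSpace ℝ (Fin n ⊕ Fin n)), fun i => ?_, fun i j => ?_, ?_⟩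
  · rw [← hL']
    exact Submodule.mem_map_of_mem (ob i).2
  · rw [key, ← Submodule.coe_inner]
    exact orthonormal_iff_ite.mp ob.orthonormal i j
  · have h1 : (Set.range fun i => e (ob i : EuclideanSpace ℝ (Fin n ⊕ Fin n)))
        = (e.toLinearMap ∘ₗ L'.subtype) '' (Set.range ⇑ob) := by
      rw [← Set.range_comp]; rfl
    have h2 : Submodule.span ℝ (Set.range ⇑ob) = ⊤ := by
      rw [← ob.coe_toBasis]; exact ob.toBasis.span_eq
    rw [h1, Submodule.span_image, h2, Submodule.map_top, LinearMap.range_comp,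
      Submodule.range_subtype, hL']

/-- Every isotropic subspace `L ⊆ ℝ^{2n}` of dimension `k` is the Krylov space
`span{x, Hx, …, H^{k-1}x}` of some skew-Hamiltonian matrix `H` and vector `x`. -/
theorem isotropic_is_krylov_of_skewHamiltonian {n k : ℕ}
    (L : Submodule ℝ ((Fin n ⊕ Fin n) → ℝ))
    (hiso : ∀ u ∈ L, ∀ v ∈ L, u ⬝ᵥ (Jmat n *ᵥ v) = 0)
    (hdim : Module.finrank ℝ L = k) :
    ∃ (H : Matrix (Fin n ⊕ Fin n) (Fin n ⊕ Fin n) ℝ) (x : (Fin n ⊕ Fin n) → ℝ),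
      IsSkewHamiltonian H ∧
      L = Submodule.span ℝ (Set.range fun i : Fin k => (H ^ (i : ℕ)) *ᵥ x) := by
  rcases Nat.eq_zero_or_pos k with hk | hk
  · subst hk
    refine ⟨0, 0, by simp [IsSkewHamiltonian], ?_⟩
    have : L = ⊥ := Submodule.finrank_eq_zero.mp hdim
    simp [this, Set.range_eq_empty]
  obtain ⟨f, hfL, hforth, hfspan⟩ := exists_orthonormal_fun L hdim
  -- the "shifted" family
  set g : Fin k → ((Fin n ⊕ Fin n) → ℝ) :=
    fun i => if h : (i : ℕ) + 1 < k then f ⟨(i : ℕ) + 1, h⟩ else 0 with hg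
  have hgL : ∀ i, g i ∈ L := by
    intro i
    by_cases h : (i : ℕ) + 1 < k
    · simp only [hg, dif_pos h]; exact hfL _
    · simp only [hg, dif_neg h]; exact L.zero_mem
  -- an auxiliary isotropy fact
  have hiso' : ∀ u ∈ L, ∀ v ∈ L, (Jmat n *ᵥ u) ⬝ᵥ v = 0 := by
    intro u hu v hv
    rw [dotProduct_comm]
    exact hiso v hv u hu
  set S : Matrix (Fin n ⊕ Fin n) (Fin n ⊕ Fin n) ℝ :=
    ∑ i : Fin k, (vecMulVec (Jmat n *ᵥ g i) (f i) - vecMulVec (f i) (Jmat n *ᵥ g i)) with hSdef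
  have hS : Sᵀ = -S := by
    rw [hSdef, transpose_sum, ← Finset.sum_neg_distrib]
    refine Finset.sum_congr rfl fun i _ => ?_
    rw [transpose_sub, vecMulVec_transpose', vecMulVec_transpose', neg_sub]
  set H : Matrix (Fin n ⊕ Fin n) (Fin n ⊕ Fin n) ℝ := -(Jmat n * S) with hHdef
  have hskew : IsSkewHamiltonian H := by
    unfold IsSkewHamiltonian
    rw [hHdef, transpose_neg, transpose_mul, hS, Jmat_transpose]
    simp only [neg_mul, mul_neg, neg_neg]
    rw [mul_assoc, mul_assoc, Jmat_mul_Jmat, mul_neg_one, mul_neg]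
  have hSf : ∀ j, S *ᵥ f j = Jmat n *ᵥ g j := by
    intro j
    rw [hSdef, sum_mulVec']
    have : ∀ i : Fin k,
        (vecMulVec (Jmat n *ᵥ g i) (f i) - vecMulVec (f i) (Jmat n *ᵥ g i)) *ᵥ f j
        = if i = j then Jmat n *ᵥ g i else 0 := by
      intro i
      rw [sub_mulVec, vecMulVec_mulVec', vecMulVec_mulVec', hforth i j,
        hiso' (g i) (hgL i) (f j) (hfL j)]
      rcases eq_or_ne i j with h | h <;> simp [h]
    rw [Finset.sum_congr rfl fun i _ => this i, Finset.sum_ite_eq' Finset.univ j]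
    simp
  have hHf : ∀ j, H *ᵥ f j = g j := by
    intro j
    rw [hHdef, neg_mulVec, ← mulVec_mulVec, hSf, mulVec_mulVec, Jmat_mul_Jmat, neg_mulVec,
      one_mulVec, neg_neg]
  set x := f ⟨0, hk⟩ with hx
  have hpow : ∀ i : Fin k, (H ^ (i : ℕ)) *ᵥ x = f i := by
    rintro ⟨m, hm⟩
    induction m with
    | zero => simp [hx]
    | succ m ih =>
      have hm' : m < k := Nat.lt_of_succ_lt hm
      have := ih hm'
      rw [pow_succ', ← mulVec_mulVec, this, hHf]
      simp only [hg]
      rw [dif_pos hm]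
  have : (fun i : Fin k => (H ^ (i : ℕ)) *ᵥ x) = f := funext hpow
  exact ⟨H, x, hskew, by rw [this, hfspan]⟩
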